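/- Let n_z ≥ 1, n_s ≥ n_z, and let 𝒳 be a nonempty set. Let M ∈ ℝ^{n_z × n_s} be a row-stochastic matrix of rank n_z, and let p : 𝒳 → ℝ^{n_z} be a function whose values are probability vectors, such that for each i ∈ {1,…,n_z} there exists x ∈ 𝒳 with p_i(x) > 1/2. Then the linear span of the set { M^⊤ p(x) : x ∈ 𝒳 } ⊆ ℝ^{n_s} has dimension exactly n_z. -/
import Mathlib


open Matrix

/-- **Step 1 of Theorem 1: the observed conditionals span a space of dimension
`n_z`.** If `M` is a full-rank row-stochastic matrix and the posteriors `p(x)`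
satisfy weak overlap (for each latent class `i` there is `x` with `p_i(x) > 1/2`),
then the span of the observed conditional distributions `{Mᵀ p(x) : x ∈ 𝒳}` has
dimension exactly `n_z`. -/
theorem span_of_observed_conditionals_dim
    (n_z n_s : ℕ) (hnz : 1 ≤ n_z) (hns : n_z ≤ n_s)
    (𝒳 : Type*) [Nonempty 𝒳]
    (M : Matrix (Fin n_z) (Fin n_s) ℝ)
    (hM_nonneg : ∀ z s, 0 ≤ M z s) (hM_rowsum : ∀ z, ∑ s, M z s = 1)
    (hM_rank : M.rank = n_z)
    (p : 𝒳 → Fin n_z → ℝ)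
    (hp_nonneg : ∀ x i, 0 ≤ p x i) (hp_sum : ∀ x, ∑ i, p x i = 1)
    (hoverlap : ∀ i : Fin n_z, ∃ x, 1 / 2 < p x i) :
    Module.finrank ℝ
      (Submodule.span ℝ (Set.range fun x : 𝒳 => M.transpose *ᵥ p x)) = n_z := by
  choose xc hxc using hoverlap
  set A : Matrix (Fin n_z) (Fin n_z) ℝ := Matrix.of fun i j => p (xc i) j with hA
  -- A is strictly diagonally dominant, hence invertible
  have hdet : A.det ≠ 0 := by
    apply det_ne_zero_of_sum_row_lt_diag
    intro k
    have hkk : (1:ℝ)/2 < A k k := hxc k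
    have hsum : ∑ j ∈ Finset.univ.erase k, A k j = 1 - A k k := by
      have := hp_sum (xc k)
      have h2 : ∑ j, A k j = 1 := this
      rw [← Finset.add_sum_erase _ _ (Finset.mem_univ k)] at h2
      linarith
    calc ∑ j ∈ Finset.univ.erase k, ‖A k j‖
        = ∑ j ∈ Finset.univ.erase k, A k j := by
          refine Finset.sum_congr rfl fun j _ => ?_
          exact Real.norm_of_nonneg (hp_nonneg _ _)
      _ = 1 - A k k := hsum
      _ < A k k := by linarith
      _ ≤ ‖A k k‖ := le_abs_self _
  have hunit : IsUnit A := (Matrix.isUnit_iff_isUnit_det A).2 (isUnit_iff_ne_zero.2 hdet)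
  have hli : LinearIndependent ℝ (fun i => A i) :=
    Matrix.linearIndependent_rows_iff_isUnit.2 hunit
  -- rows of A span everything
  haveI : Nonempty (Fin n_z) := ⟨⟨0, hnz⟩⟩
  have hspanA : Submodule.span ℝ (Set.range fun i => A i) = ⊤ := by
    apply hli.span_eq_top_of_card_eq_finrank
    simp
  have hspanp : Submodule.span ℝ (Set.range p) = ⊤ := by
    rw [eq_top_iff, ← hspanA]
    apply Submodule.span_mono
    rintro _ ⟨i, rfl⟩
    exact ⟨xc i, rfl⟩
  have hrange : (Set.range fun x : 𝒳 => M.transpose *ᵥ p x)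
      = M.transpose.mulVecLin '' Set.range p := by
    ext v
    constructor
    · rintro ⟨x, rfl⟩; exact ⟨p x, ⟨x, rfl⟩, rfl⟩
    · rintro ⟨w, ⟨x, rfl⟩, rfl⟩; exact ⟨x, rfl⟩
  rw [hrange, ← Submodule.map_span, hspanp, Submodule.map_top]
  rw [show Module.finrank ℝ ↥(LinearMap.range M.transpose.mulVecLin) = Mᵀ.rank from rfl,
    Matrix.rank_transpose, hM_rank]
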